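/- Explicit DIO dilution map: let ρ' be a state and M ≥ 2 an integer with ρ' ≤ MΔ(ρ') in the Loewner order. Then the map 𝓔(ω) = (M/(M−1))[(Tr[Ψ_M ω] − 1/M)ρ' + (1 − Tr[Ψ_M ω])Δ(ρ')] is completely positive and trace preserving, satisfies 𝓔(Δ(ω)) = Δ(𝓔(ω)) = Δ(ρ') for every state ω (so 𝓔 is dephasing-covariant), and satisfies 𝓔(Ψ_M) = ρ'. -/

import Mathlib

open scoped Matrix ComplexOrder

namespace OneShot

variable {ι κ : Type*} [Fintype ι] [DecidableEq ι] [Fintype κ] [DecidableEq κ]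

/-- A quantum state: a positive semidefinite matrix with unit trace. -/
def IsState (ρ : Matrix ι ι ℂ) : Prop := ρ.PosSemidef ∧ ρ.trace = 1

/-- An incoherent state: a state that is diagonal in the computational basis. -/
def IsIncoherent (ρ : Matrix ι ι ℂ) : Prop := IsState ρ ∧ ρ.IsDiag

/-- The completely dephasing channel `Δ`. -/
def dephase (ρ : Matrix ι ι ℂ) : Matrix ι ι ℂ := Matrix.diagonal fun i => ρ i i

/-- The max-relative entropy of coherence
`C_max(ρ) = min_{δ ∈ 𝓘} D_max(ρ‖δ) = log₂ min {λ ≥ 0 | ∃ δ ∈ 𝓘, ρ ≤ λ δ}`. -/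
noncomputable def Cmax (ρ : Matrix ι ι ℂ) : ℝ :=
  Real.logb 2 (sInf {l : ℝ | 0 ≤ l ∧ ∃ δ, IsIncoherent δ ∧ (l • δ - ρ).PosSemidef})

/-- `C_{Δ,max}(ρ) = log₂ min {λ ≥ 0 | ρ ≤ λ Δ(ρ)}`. -/
noncomputable def CDmax (ρ : Matrix ι ι ℂ) : ℝ :=
  Real.logb 2 (sInf {l : ℝ | 0 ≤ l ∧ (l • dephase ρ - ρ).PosSemidef})

/-- Complete positivity of a linear map on matrices. -/
def CompletelyPositive (Λ : Matrix ι ι ℂ →ₗ[ℂ] Matrix κ κ ℂ) : Prop :=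
  ∀ (k : ℕ) (M : Matrix (Fin k × ι) (Fin k × ι) ℂ), M.PosSemidef →
    (Matrix.of fun p q : Fin k × κ =>
      Λ (Matrix.of fun x y => M (p.1, x) (q.1, y)) p.2 q.2).PosSemidef

/-- Trace preservation. -/
def TracePreserving (Λ : Matrix ι ι ℂ →ₗ[ℂ] Matrix κ κ ℂ) : Prop :=
  ∀ A, (Λ A).trace = A.trace

/-- A maximally incoherent operation (MIO): a CPTP map sending every incoherent state
to an incoherent state. -/
def IsMIO (Λ : Matrix ι ι ℂ →ₗ[ℂ] Matrix κ κ ℂ) : Prop :=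
  CompletelyPositive Λ ∧ TracePreserving Λ ∧ ∀ δ, IsIncoherent δ → IsIncoherent (Λ δ)

/-- A dephasing-covariant incoherent operation (DIO): a CPTP map commuting with `Δ`. -/
def IsDIO (Λ : Matrix ι ι ℂ →ₗ[ℂ] Matrix ι ι ℂ) : Prop :=
  CompletelyPositive Λ ∧ TracePreserving Λ ∧ ∀ ρ, Λ (dephase ρ) = dephase (Λ ρ)

/-- An incoherent-preserving (Kraus) operator: `K δ Kᴴ` is a nonnegative multiple of an
incoherent state, for every incoherent state `δ`. -/
def IncoherentPreserving (K : Matrix κ ι ℂ) : Prop :=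
  ∀ δ : Matrix ι ι ℂ, IsIncoherent δ →
    ∃ c : ℝ, 0 ≤ c ∧ ∃ δ' : Matrix κ κ ℂ, IsIncoherent δ' ∧ K * δ * Kᴴ = (c : ℂ) • δ'

/-- An incoherent operation (IO). -/
def IsIO (Λ : Matrix ι ι ℂ →ₗ[ℂ] Matrix κ κ ℂ) : Prop :=
  ∃ (N : ℕ) (K : Fin N → Matrix κ ι ℂ),
    (∀ n, IncoherentPreserving (K n)) ∧ (∑ n, (K n)ᴴ * K n = 1) ∧
    ∀ ρ, Λ ρ = ∑ n, K n * ρ * (K n)ᴴ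

/-- A strictly incoherent operation (SIO). -/
def IsSIO (Λ : Matrix ι ι ℂ →ₗ[ℂ] Matrix κ κ ℂ) : Prop :=
  ∃ (N : ℕ) (K : Fin N → Matrix κ ι ℂ),
    (∀ n, IncoherentPreserving (K n)) ∧ (∀ n, IncoherentPreserving (K n)ᴴ) ∧
    (∑ n, (K n)ᴴ * K n = 1) ∧ ∀ ρ, Λ ρ = ∑ n, K n * ρ * (K n)ᴴ

/-- The outer product `|ψ⟩⟨ψ|`. -/
def outer (ψ : ι → ℂ) : Matrix ι ι ℂ := Matrix.of fun i j => ψ i * star (ψ j)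

/-- `T ψ` is the number of nonzero computational-basis coefficients of `ψ`. -/
noncomputable def T (ψ : ι → ℂ) : ℕ := (Finset.univ.filter fun i => ψ i ≠ 0).card

/-- A finite pure-state decomposition `ρ = Σ_j p_j |ψ_j⟩⟨ψ_j|`. -/
def IsDecomposition (ρ : Matrix ι ι ℂ) (n : ℕ) (p : Fin n → ℝ) (ψ : Fin n → ι → ℂ) : Prop :=
  (∀ j, 0 < p j) ∧ (∑ j, p j = 1) ∧ (∀ j, ∑ i, Complex.normSq (ψ j i) = 1) ∧
    ρ = ∑ j, p j • outer (ψ j)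

/-- `C_0(ρ) = min over decompositions of max_j log₂ T(ψ_j)`. -/
noncomputable def C0 (ρ : Matrix ι ι ℂ) : ℝ :=
  sInf { r | ∃ n p ψ, IsDecomposition ρ n p ψ ∧
    r = Real.logb 2 (↑(Finset.univ.sup fun j => T (ψ j)) : ℝ) }

/-- Matrix square root of a positive semidefinite matrix (junk value `0` elsewhere). -/
noncomputable def msqrt (A : Matrix ι ι ℂ) : Matrix ι ι ℂ :=
  letI := Classical.propDecidable A.PosSemidef
  if h : A.PosSemidef then
    (h.1.eigenvectorUnitary : Matrix ι ι ℂ) *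
      Matrix.diagonal ((↑) ∘ (fun x : ℝ => √x) ∘ h.1.eigenvalues) *
      (star h.1.eigenvectorUnitary : Matrix ι ι ℂ)
  else 0

/-- Uhlmann fidelity `F(ρ,σ) = (Tr √(√ρ σ √ρ))²`. -/
noncomputable def Fid (ρ σ : Matrix ι ι ℂ) : ℝ :=
  ((msqrt (msqrt ρ * σ * msqrt ρ)).trace.re) ^ 2

/-- Smoothed `C_max`. -/
noncomputable def Cmaxeps (ρ : Matrix ι ι ℂ) (ε : ℝ) : ℝ :=
  sInf { r | ∃ ρ', IsState ρ' ∧ 1 - ε ≤ Fid ρ ρ' ∧ r = Cmax ρ' }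

/-- Smoothed `C_{Δ,max}`. -/
noncomputable def CDmaxeps (ρ : Matrix ι ι ℂ) (ε : ℝ) : ℝ :=
  sInf { r | ∃ ρ', IsState ρ' ∧ 1 - ε ≤ Fid ρ ρ' ∧ r = CDmax ρ' }

/-- Smoothed `C_0`. -/
noncomputable def C0eps (ρ : Matrix ι ι ℂ) (ε : ℝ) : ℝ :=
  sInf { r | ∃ ρ', IsState ρ' ∧ 1 - ε ≤ Fid ρ ρ' ∧ r = C0 ρ' }

/-- The maximally coherent state `Ψ_M = |Ψ_M⟩⟨Ψ_M|` of dimension `M`. -/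
noncomputable def PsiM (M : ℕ) : Matrix (Fin M) (Fin M) ℂ := Matrix.of fun _ _ => (1 : ℂ) / M

/-- One-shot coherence cost under MIO. -/
noncomputable def CMIOeps (ρ : Matrix ι ι ℂ) (ε : ℝ) : ℝ :=
  sInf { r | ∃ M : ℕ, 1 ≤ M ∧ r = Real.logb 2 M ∧
    ∃ Λ : Matrix (Fin M) (Fin M) ℂ →ₗ[ℂ] Matrix ι ι ℂ, IsMIO Λ ∧ 1 - ε ≤ Fid ρ (Λ (PsiM M)) }

/-- One-shot coherence cost under DIO. -/
noncomputable def CDIOeps (ρ : Matrix ι ι ℂ) (ε : ℝ) : ℝ :=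
  sInf { r | ∃ M : ℕ, 1 ≤ M ∧ r = Real.logb 2 M ∧
    ∃ Λ : Matrix (Fin M) (Fin M) ℂ →ₗ[ℂ] Matrix ι ι ℂ,
      CompletelyPositive Λ ∧ TracePreserving Λ ∧ (∀ ω, Λ (dephase ω) = dephase (Λ ω)) ∧
      1 - ε ≤ Fid ρ (Λ (PsiM M)) }

/-- One-shot coherence cost under IO. -/
noncomputable def CIOeps (ρ : Matrix ι ι ℂ) (ε : ℝ) : ℝ :=
  sInf { r | ∃ M : ℕ, 1 ≤ M ∧ r = Real.logb 2 M ∧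
    ∃ Λ : Matrix (Fin M) (Fin M) ℂ →ₗ[ℂ] Matrix ι ι ℂ, IsIO Λ ∧ 1 - ε ≤ Fid ρ (Λ (PsiM M)) }

/-- One-shot coherence cost under SIO. -/
noncomputable def CSIOeps (ρ : Matrix ι ι ℂ) (ε : ℝ) : ℝ :=
  sInf { r | ∃ M : ℕ, 1 ≤ M ∧ r = Real.logb 2 M ∧
    ∃ Λ : Matrix (Fin M) (Fin M) ℂ →ₗ[ℂ] Matrix ι ι ℂ, IsSIO Λ ∧ 1 - ε ≤ Fid ρ (Λ (PsiM M)) }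

/-- Matrix logarithm (base 2) via the spectral decomposition, with `log₂ 0 = 0` junk
convention on the kernel, and junk value `0` on non-Hermitian matrices. -/
noncomputable def mlog2 (A : Matrix ι ι ℂ) : Matrix ι ι ℂ :=
  letI := Classical.propDecidable A.IsHermitian
  if h : A.IsHermitian then
    (h.eigenvectorUnitary : Matrix ι ι ℂ) *
      Matrix.diagonal (fun i => (Real.logb 2 (h.eigenvalues i) : ℂ)) *
      (h.eigenvectorUnitary : Matrix ι ι ℂ)ᴴ
  else 0

/-- The relative entropy of coherence `C_r(ρ) = min_{δ ∈ 𝓘} S(ρ‖δ)`, where the minimum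
is (equivalently) restricted to those `δ` whose support contains the support of `ρ`,
on which `S(ρ‖δ) = Tr[ρ (log₂ ρ − log₂ δ)]` is finite. -/
noncomputable def Cr (ρ : Matrix ι ι ℂ) : ℝ :=
  sInf { r | ∃ δ, IsIncoherent δ ∧ (∀ v : ι → ℂ, δ.mulVec v = 0 → ρ.mulVec v = 0) ∧
    r = ((ρ * (mlog2 ρ - mlog2 δ)).trace).re }

/-- Von Neumann entropy (base 2). -/
noncomputable def vN (σ : Matrix ι ι ℂ) : ℝ := -((σ * mlog2 σ).trace.re)

/-- The coherence of formation. -/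
noncomputable def Cf (ρ : Matrix ι ι ℂ) : ℝ :=
  sInf { r | ∃ n p ψ, IsDecomposition ρ n p ψ ∧
    r = ∑ j, p j * vN (dephase (outer (ψ j))) }

/-- The set `A_ρ = { (1/t)[(1+t)Δ(ρ) − ρ] : t > 0, (1+t)Δ(ρ) − ρ ≥ 0 }`. -/
def Aset (ρ : Matrix ι ι ℂ) : Set (Matrix ι ι ℂ) :=
  { σ | ∃ t : ℝ, 0 < t ∧ ((1 + t) • dephase ρ - ρ).PosSemidef ∧
      σ = t⁻¹ • ((1 + t) • dephase ρ - ρ) }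

/-- The `n`-fold tensor power `ρ^{⊗ n}`. -/
def tpow (ρ : Matrix ι ι ℂ) (n : ℕ) : Matrix (Fin n → ι) (Fin n → ι) ℂ :=
  Matrix.of fun i j => ∏ t, ρ (i t) (j t)


section DIOAux

set_option linter.unusedSectionVars false

lemma psd_add {A B : Matrix ι ι ℂ} (hA : A.PosSemidef) (hB : B.PosSemidef) :
    (A + B).PosSemidef := by
  refine .of_dotProduct_mulVec_nonneg (hA.1.add hB.1) fun x => ?_
  rw [Matrix.add_mulVec, dotProduct_add]
  exact add_nonneg (hA.dotProduct_mulVec_nonneg x) (hB.dotProduct_mulVec_nonneg x)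

lemma psd_smul {A : Matrix ι ι ℂ} (hA : A.PosSemidef) {c : ℝ} (hc : 0 ≤ c) :
    (((c : ℂ)) • A).PosSemidef := by
  refine .of_dotProduct_mulVec_nonneg ?_ ?_
  · have := hA.1
    unfold Matrix.IsHermitian at this ⊢
    rw [Matrix.conjTranspose_smul, this]
    congr 1
    exact Complex.conj_ofReal c
  · intro x
    rw [Matrix.smul_mulVec, dotProduct_smul, smul_eq_mul]
    exact mul_nonneg (by exact_mod_cast Complex.zero_le_real.mpr hc) (hA.dotProduct_mulVec_nonneg x)

lemma psd_sum {α : Type*} [Fintype α] (f : α → Matrix ι ι ℂ)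
    (h : ∀ a, (f a).PosSemidef) : (∑ a, f a).PosSemidef := by
  classical
  exact Finset.sum_induction f _ (fun a b ha hb => psd_add ha hb) Matrix.PosSemidef.zero
    (fun a _ => h a)

lemma kraus_cp {α : Type*} [Fintype α] (Λ : Matrix ι ι ℂ →ₗ[ℂ] Matrix κ κ ℂ)
    (K : α → Matrix κ ι ℂ) (h : ∀ ω, Λ ω = ∑ n, K n * ω * (K n)ᴴ) :
    CompletelyPositive Λ := by
  classical
  intro k M hM
  have key : (Matrix.of fun p q : Fin k × κ =>
      Λ (Matrix.of fun x y => M (p.1, x) (q.1, y)) p.2 q.2)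
      = ∑ n, (Matrix.of fun (p : Fin k × κ) (q : Fin k × ι) =>
          if p.1 = q.1 then K n p.2 q.2 else 0) * M *
          (Matrix.of fun (p : Fin k × κ) (q : Fin k × ι) =>
          if p.1 = q.1 then K n p.2 q.2 else 0)ᴴ := by
    ext p q
    simp only [Matrix.of_apply, h, Matrix.sum_apply, Matrix.mul_apply,
      Matrix.conjTranspose_apply, Fintype.sum_prod_type, Finset.sum_mul, Finset.mul_sum]
    refine Finset.sum_congr rfl fun n _ => ?_
    simp [Finset.sum_ite_eq, apply_ite, Finset.mul_sum, Finset.sum_mul, mul_comm, mul_left_comm]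
  rw [key]
  exact psd_sum _ fun n => hM.mul_mul_conjTranspose_same _

lemma cp_add {Λ₁ Λ₂ : Matrix ι ι ℂ →ₗ[ℂ] Matrix κ κ ℂ}
    (h1 : CompletelyPositive Λ₁) (h2 : CompletelyPositive Λ₂) :
    CompletelyPositive (Λ₁ + Λ₂) := by
  intro k M hM
  have := psd_add (h1 k M hM) (h2 k M hM)
  convert this using 1
  all_goals (ext p q; simp [Matrix.add_apply])

/-- The map `ω ↦ Tr[P ω] • S`. -/
noncomputable def rk (P : Matrix ι ι ℂ) (S : Matrix κ κ ℂ) :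
    Matrix ι ι ℂ →ₗ[ℂ] Matrix κ κ ℂ where
  toFun ω := (P * ω).trace • S
  map_add' x y := by simp only [Matrix.mul_add, Matrix.trace_add, add_smul]
  map_smul' c x := by
    simp only [Matrix.mul_smul, Matrix.trace_smul, smul_assoc, RingHom.id_apply]

lemma rk_apply (P : Matrix ι ι ℂ) (S : Matrix κ κ ℂ) (ω : Matrix ι ι ℂ) :
    rk P S ω = (P * ω).trace • S := rfl

lemma sum4 {α β γ δ N : Type*} [Fintype α] [Fintype β] [Fintype γ] [Fintype δ]
    [AddCommMonoid N] (f : α → β → γ → δ → N) :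
    ∑ a, ∑ b, ∑ c, ∑ d, f a b c d = ∑ d, ∑ a, ∑ b, ∑ c, f a b c d := by
  trans ∑ a, ∑ b, ∑ d, ∑ c, f a b c d
  · exact Finset.sum_congr rfl fun a _ => Finset.sum_congr rfl fun b _ => Finset.sum_comm
  trans ∑ a, ∑ d, ∑ b, ∑ c, f a b c d
  · exact Finset.sum_congr rfl fun a _ => Finset.sum_comm
  · exact Finset.sum_comm

lemma rk_kraus {P : Matrix ι ι ℂ} {S : Matrix κ κ ℂ}
    (A : Matrix ι ι ℂ) (B : Matrix κ κ ℂ) (hP : P = Aᴴ * A) (hS : S = Bᴴ * B)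
    (ω : Matrix ι ι ℂ) :
    rk P S ω = ∑ n : ι × κ,
      (Matrix.of fun u x => A n.1 x * star (B n.2 u)) * ω *
      (Matrix.of fun u x => A n.1 x * star (B n.2 u))ᴴ := by
  ext u w
  simp only [rk, LinearMap.coe_mk, AddHom.coe_mk, Matrix.smul_apply, Matrix.sum_apply,
    Matrix.mul_apply, Matrix.conjTranspose_apply, Matrix.of_apply, Matrix.trace,
    Matrix.diag, hP, hS, Fintype.sum_prod_type, smul_eq_mul, star_mul', star_star]
  simp only [Finset.sum_mul, Finset.mul_sum]
  conv_lhs => rw [sum4]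
  refine Finset.sum_congr rfl fun r _ => Finset.sum_congr rfl fun s _ =>
    Finset.sum_congr rfl fun y _ => Finset.sum_congr rfl fun x _ => ?_
  ring

open scoped MatrixOrder in
lemma rk_cp {P : Matrix ι ι ℂ} {S : Matrix κ κ ℂ}
    (hP : P.PosSemidef) (hS : S.PosSemidef) : CompletelyPositive (rk P S) := by
  obtain ⟨A, hA⟩ := CStarAlgebra.nonneg_iff_eq_star_mul_self.mp hP.nonneg
  obtain ⟨B, hB⟩ := CStarAlgebra.nonneg_iff_eq_star_mul_self.mp hS.nonneg
  exact kraus_cp _ _ (rk_kraus A B hA hB)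

lemma dephase_trace (ρ : Matrix ι ι ℂ) : (dephase ρ).trace = ρ.trace := by
  simp [dephase, Matrix.trace, Matrix.diag]

lemma dephase_add (ρ σ : Matrix ι ι ℂ) :
    dephase (ρ + σ) = dephase ρ + dephase σ := by
  simp [dephase, Matrix.diagonal_add, Matrix.add_apply]

lemma dephase_smul (c : ℂ) (ρ : Matrix ι ι ℂ) :
    dephase (c • ρ) = c • dephase ρ := by
  ext i j
  by_cases h : i = j <;> simp [dephase, Matrix.diagonal, h]

lemma dephase_sub (ρ σ : Matrix ι ι ℂ) :
    dephase (ρ - σ) = dephase ρ - dephase σ := by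
  simp [dephase, Matrix.diagonal_sub, Matrix.sub_apply]

lemma dephase_dephase (ρ : Matrix ι ι ℂ) : dephase (dephase ρ) = dephase ρ := by
  simp [dephase]

end DIOAux

/-- explicit DIO dilution map. -/
theorem DIO_dilution_map {d M : ℕ} (hM : 2 ≤ M) (ρ' : Matrix (Fin d) (Fin d) ℂ)
    (hρ' : IsState ρ') (hle : ((M : ℝ) • dephase ρ' - ρ').PosSemidef) :
    ∃ Λ : Matrix (Fin M) (Fin M) ℂ →ₗ[ℂ] Matrix (Fin d) (Fin d) ℂ,
      (∀ ω, IsState ω → Λ ω = ((M : ℂ) / ((M : ℂ) - 1)) •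
        (((PsiM M * ω).trace - 1 / (M : ℂ)) • ρ' +
          (1 - (PsiM M * ω).trace) • dephase ρ')) ∧
      CompletelyPositive Λ ∧ TracePreserving Λ ∧
      (∀ ω, IsState ω → Λ (dephase ω) = dephase ρ' ∧ dephase (Λ ω) = dephase ρ') ∧
      Λ (PsiM M) = ρ' := by
  have hMn0 : M ≠ 0 := by omega
  have hM0 : (M : ℂ) ≠ 0 := Nat.cast_ne_zero.mpr hMn0
  have hM1 : (M : ℂ) - 1 ≠ 0 := by
    rw [sub_ne_zero]
    intro h
    have : M = 1 := by exact_mod_cast h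
    omega
  set Ψ : Matrix (Fin M) (Fin M) ℂ := PsiM M with hΨ
  have hΨherm : Ψᴴ = Ψ := by
    ext i j
    simp [hΨ, PsiM, Matrix.conjTranspose_apply]
  have hΨmul : Ψ * Ψ = Ψ := by
    ext i j
    simp only [hΨ, PsiM, Matrix.mul_apply, Matrix.of_apply, Finset.sum_const,
      Finset.card_univ, Fintype.card_fin, nsmul_eq_mul]
    field_simp
  have hΨtrace : Ψ.trace = 1 := by
    simp only [hΨ, PsiM, Matrix.trace, Matrix.diag, Matrix.of_apply, Finset.sum_const,
      Finset.card_univ, Fintype.card_fin, nsmul_eq_mul]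
    field_simp
  have hΨpsd : Ψ.PosSemidef := by
    have := Matrix.posSemidef_conjTranspose_mul_self Ψ
    rwa [hΨherm, hΨmul] at this
  have hQpsd : (1 - Ψ).PosSemidef := by
    have h1 : (1 - Ψ)ᴴ = 1 - Ψ := by
      rw [Matrix.conjTranspose_sub, Matrix.conjTranspose_one, hΨherm]
    have h2 : (1 - Ψ) * (1 - Ψ) = 1 - Ψ := by
      rw [Matrix.sub_mul, Matrix.one_mul, Matrix.mul_sub, Matrix.mul_one, hΨmul]
      abel
    have := Matrix.posSemidef_conjTranspose_mul_self (1 - Ψ)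
    rwa [h1, h2] at this
  set X : Matrix (Fin d) (Fin d) ℂ := (M : ℂ) • dephase ρ' - ρ' with hX
  have hXpsd : X.PosSemidef := by
    have : X = (M : ℝ) • dephase ρ' - ρ' := by
      ext i j
      simp [hX, Matrix.sub_apply, Matrix.smul_apply, Complex.real_smul]
    rw [this]; exact hle
  set B : Matrix (Fin d) (Fin d) ℂ := ((M : ℂ) - 1)⁻¹ • X with hB
  have hBpsd : B.PosSemidef := by
    have hc0 : (0 : ℝ) ≤ ((M : ℝ) - 1)⁻¹ := by
      have h1 : (1 : ℝ) ≤ (M : ℝ) := by exact_mod_cast Nat.one_le_of_lt hM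
      have h2 : (0 : ℝ) ≤ (M : ℝ) - 1 := by linarith
      positivity
    have h := psd_smul hXpsd hc0
    have hc : ((((M : ℝ) - 1)⁻¹ : ℝ) : ℂ) = ((M : ℂ) - 1)⁻¹ := by
      push_cast
      ring
    rwa [hc] at h
  have hBtr : B.trace = 1 := by
    rw [hB, Matrix.trace_smul, hX, Matrix.trace_sub, Matrix.trace_smul, dephase_trace,
      hρ'.2]
    simp only [smul_eq_mul, mul_one]
    field_simp
  have hQtr : ∀ ω : Matrix (Fin M) (Fin M) ℂ,
      ((1 - Ψ) * ω).trace = ω.trace - (Ψ * ω).trace := fun ω => by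
    rw [Matrix.sub_mul, Matrix.one_mul, Matrix.trace_sub]
  refine ⟨rk Ψ ρ' + rk (1 - Ψ) B, ?_, ?_, ?_, ?_, ?_⟩
  · intro ω hω
    simp only [LinearMap.add_apply, rk_apply, hQtr, hω.2, hB, hX]
    match_scalars <;> field_simp <;> ring
  · exact cp_add (rk_cp hΨpsd hρ'.1) (rk_cp hQpsd hBpsd)
  · intro A
    simp only [LinearMap.add_apply, rk_apply, Matrix.trace_add, Matrix.trace_smul,
      smul_eq_mul, hBtr, hρ'.2, hQtr]
    ring
  · intro ω hω
    have hdtr : (dephase ω).trace = 1 := by rw [dephase_trace, hω.2]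
    have ht : (Ψ * dephase ω).trace = 1 / (M : ℂ) := by
      have : (Ψ * dephase ω).trace = (1 / (M : ℂ)) * ω.trace := by
        simp only [hΨ, PsiM, dephase, Matrix.trace, Matrix.diag, Matrix.mul_apply,
          Matrix.of_apply, Matrix.diagonal_apply, mul_ite, mul_zero,
          Finset.sum_ite_eq, Finset.mem_univ, if_true, Finset.mul_sum]
        simp
      rw [this, hω.2, mul_one]
    constructor
    · simp only [LinearMap.add_apply, rk_apply, hQtr, ht, hdtr, hB, hX]
      match_scalars <;> field_simp <;> ring
    · simp only [LinearMap.add_apply, rk_apply, hQtr, hω.2, hB, hX]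
      rw [dephase_add, dephase_smul, dephase_smul, dephase_smul, dephase_sub,
        dephase_smul, dephase_dephase]
      match_scalars <;> field_simp <;> ring
  · simp only [LinearMap.add_apply, rk_apply, ← hΨ, hΨmul, hΨtrace, hQtr]
    simp

end OneShot
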